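/- (Upper bound for successive minima of compounds) Let C be a symmetric convex body and Λ a lattice in ℝ^n, 1 ≤ p ≤ n−1, N = C(n,p). Let μ_1 ≤ ⋯ ≤ μ_N be the products λ_{i_1}(C,Λ)⋯λ_{i_p}(C,Λ) over increasing p-tuples (i_1,…,i_p), arranged in non-decreasing order. Then λ_i(C_p, Λ_p) ≤ μ_i for i = 1,…,N. -/

import Mathlib

open Pointwise

/-- Index set for coordinates of the `p`-th exterior power of `ℝⁿ`. -/
abbrev WedgeIdx (n p : ℕ) := {s : Finset (Fin n) // s.card = p}

/-- The exterior product `x₁ ∧ ⋯ ∧ x_p` in Plücker coordinates. -/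
noncomputable def wedge (n p : ℕ) (v : Fin p → Fin n → ℝ) : WedgeIdx n p → ℝ :=
  fun s => Matrix.det (Matrix.of fun i j => v i ((s.1.orderIsoOfFin s.2 j : Fin n)))

/-- The lattice spanned over ℤ by the rows of `B`. -/
def latticeOf {n : ℕ} (B : Fin n → Fin n → ℝ) : Set (Fin n → ℝ) :=
  {x | ∃ z : Fin n → ℤ, x = ∑ i, (z i : ℝ) • B i}

/-- The `p`-th compound lattice. -/
def compoundLattice (n p : ℕ) (L : Set (Fin n → ℝ)) : Set (WedgeIdx n p → ℝ) :=
  (Submodule.span ℤ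
    {w : WedgeIdx n p → ℝ | ∃ v : Fin p → Fin n → ℝ,
      (∀ i, v i ∈ L) ∧ w = wedge n p v} : Set (WedgeIdx n p → ℝ))

/-- The `p`-th compound body. -/
noncomputable def compoundBody (n p : ℕ) (C : Set (Fin n → ℝ)) : Set (WedgeIdx n p → ℝ) :=
  convexHull ℝ {w : WedgeIdx n p → ℝ | ∃ v : Fin p → Fin n → ℝ,
    (∀ i, v i ∈ C) ∧ w = wedge n p v}

/-- The `i`-th successive minimum of `C` with respect to `L`. -/
noncomputable def succMin {E : Type*} [AddCommGroup E] [Module ℝ E]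
    (C L : Set E) (i : ℕ) : ℝ :=
  sInf {lam : ℝ | 0 < lam ∧ ∃ v : Fin i → E, LinearIndependent ℝ v ∧
    ∀ j, v j ∈ L ∧ v j ∈ lam • C}

/-! ### Auxiliary lemmas -/

open Module Submodule

/-- `wedge` as a multilinear map. -/
noncomputable def wedgeML (n p : ℕ) :
    MultilinearMap ℝ (fun _ : Fin p => (Fin n → ℝ)) (WedgeIdx n p → ℝ) :=
  MultilinearMap.pi fun s =>
    (Matrix.detRowAlternating (n := Fin p) (R := ℝ)).toMultilinearMap.compLinearMap
      fun _ => LinearMap.funLeft ℝ ℝ fun j => ((s.1.orderIsoOfFin s.2 j : Fin n))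

lemma wedge_eq_ML {n p : ℕ} (v : Fin p → Fin n → ℝ) : wedge n p v = wedgeML n p v := rfl

lemma wedge_smul {n p : ℕ} (c : Fin p → ℝ) (v : Fin p → Fin n → ℝ) :
    wedge n p (fun i => c i • v i) = (∏ i, c i) • wedge n p v := by
  rw [wedge_eq_ML, wedge_eq_ML, MultilinearMap.map_smul_univ]

lemma wedge_zero {n p : ℕ} (hp : 0 < p) : wedge n p (fun _ => (0 : Fin n → ℝ)) = 0 := by
  funext s
  exact Matrix.det_eq_zero_of_row_eq_zero ⟨0, hp⟩ (fun j => rfl)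

lemma wedge_perm {n p : ℕ} (v : Fin p → Fin n → ℝ) (σ : Equiv.Perm (Fin p)) :
    wedge n p (fun i => v (σ i)) = ((Equiv.Perm.sign σ : ℤ) : ℝ) • wedge n p v := by
  funext s
  have := Matrix.det_permute σ (Matrix.of fun i j => v i ((s.1.orderIsoOfFin s.2 j : Fin n)))
  simpa [wedge, Matrix.submatrix] using this

/-- The subfamily of `v` indexed by a `p`-element subset (in increasing order). -/
noncomputable def subFam {n p : ℕ} (v : Fin n → Fin n → ℝ) (t : WedgeIdx n p) :
    Fin p → Fin n → ℝ :=
  fun i => v ((t.1.orderIsoOfFin t.2 i : Fin n))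

lemma wedge_single {n p : ℕ} (s t : WedgeIdx n p) :
    wedge n p (subFam (fun i => Pi.single i (1:ℝ)) s) t = if s = t then 1 else 0 := by
  classical
  by_cases h : s = t
  · subst h
    rw [if_pos rfl]
    have : (Matrix.of fun i j =>
        subFam (fun i => Pi.single i (1:ℝ)) s i ((s.1.orderIsoOfFin s.2 j : Fin n)))
        = (1 : Matrix (Fin p) (Fin p) ℝ) := by
      ext i j
      simp only [Matrix.of_apply, subFam, Pi.single_apply, Matrix.one_apply]
      have hinj : ((s.1.orderIsoOfFin s.2 j : Fin n) = (s.1.orderIsoOfFin s.2 i : Fin n)) ↔ j = i := by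
        constructor
        · intro hh
          exact (s.1.orderIsoOfFin s.2).injective (Subtype.ext hh)
        · rintro rfl; rfl
      rw [if_congr hinj rfl rfl]
      simp [eq_comm]
    rw [wedge, this, Matrix.det_one]
  · rw [if_neg h]
    have hne : s.1 ≠ t.1 := fun hh => h (Subtype.ext hh)
    have hns : ¬ s.1 ⊆ t.1 := by
      intro hsub
      exact hne (Finset.eq_of_subset_of_card_le hsub (by rw [s.2, t.2]))
    obtain ⟨a, ha, hat⟩ := Finset.not_subset.mp hns
    set i := (s.1.orderIsoOfFin s.2).symm ⟨a, ha⟩ with hi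
    apply Matrix.det_eq_zero_of_row_eq_zero i
    intro j
    have hsi : (s.1.orderIsoOfFin s.2 i : Fin n) = a := by rw [hi]; simp
    simp only [Matrix.of_apply, subFam, hsi]
    apply Pi.single_eq_of_ne
    intro hh
    apply hat
    rw [← hh]
    exact (t.1.orderIsoOfFin t.2 j).2

/-- Wedges of `p`-element subfamilies of a linearly independent family of `n` vectors in `ℝⁿ`
are linearly independent. -/
lemma linIndep_wedge_subFam {n p : ℕ} {v : Fin n → Fin n → ℝ} (hv : LinearIndependent ℝ v) :
    LinearIndependent ℝ (fun t : WedgeIdx n p => wedge n p (subFam v t)) := by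
  classical
  refine linearIndependent_of_top_le_span_of_card_eq_finrank ?_
    (by rw [Module.finrank_fintype_fun_eq_card])
  -- spanning
  set T := span ℝ (Set.range fun t : WedgeIdx n p => wedge n p (subFam v t)) with hT
  have key : ∀ r : Fin p → Fin n, wedge n p (fun i => v (r i)) ∈ T := by
    intro r
    by_cases hr : Function.Injective r
    · have hcard : (Finset.univ.image r).card = p := by
        rw [Finset.card_image_of_injective _ hr, Finset.card_univ, Fintype.card_fin]
      set t : WedgeIdx n p := ⟨Finset.univ.image r, hcard⟩ with ht
      have hmem : ∀ i, r i ∈ t.1 := fun i => Finset.mem_image_of_mem r (Finset.mem_univ i)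
      have hr' : Function.Bijective (fun i => (⟨r i, hmem i⟩ : t.1)) := by
        rw [Fintype.bijective_iff_injective_and_card]
        constructor
        · intro a b hab
          exact hr (congrArg Subtype.val hab)
        · rw [Fintype.card_fin, Fintype.card_coe, hcard]
      set σ : Equiv.Perm (Fin p) :=
        (Equiv.ofBijective _ hr').trans (t.1.orderIsoOfFin t.2).toEquiv.symm with hσ
      have hsig : ∀ i, (t.1.orderIsoOfFin t.2 (σ i) : Fin n) = r i := by
        intro i
        have h5 : (t.1.orderIsoOfFin t.2).toEquiv
            ((t.1.orderIsoOfFin t.2).toEquiv.symm ⟨r i, hmem i⟩) = ⟨r i, hmem i⟩ :=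
          Equiv.apply_symm_apply _ _
        exact congrArg Subtype.val h5
      have heq : (fun i => v (r i)) = fun i => subFam v t (σ i) :=
        funext fun i => by rw [subFam, hsig]
      rw [heq, wedge_perm]
      exact Submodule.smul_mem _ _ (Submodule.subset_span ⟨t, rfl⟩)
    · rw [Function.Injective] at hr
      push_neg at hr
      obtain ⟨i, j, hij, hne⟩ := hr
      have : wedge n p (fun i => v (r i)) = 0 := by
        funext s
        exact Matrix.det_zero_of_row_eq hne (funext fun j' => by
          simp only [Matrix.of_apply, hij])
      rw [this]
      exact Submodule.zero_mem _
  have hvtop : ∀ x : Fin n → ℝ, x ∈ span ℝ (Set.range v) := by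
    have := hv.span_eq_top_of_card_eq_finrank' (by
      rw [Module.finrank_fintype_fun_eq_card, Fintype.card_fin])
    intro x; rw [this]; trivial
  have hsingle : ∀ s : WedgeIdx n p, Pi.single s (1:ℝ) ∈ T := by
    intro s
    have h1 : Pi.single s (1:ℝ) = wedge n p (subFam (fun i => Pi.single i 1) s) := by
      funext t
      rw [wedge_single]
      simp [Pi.single_apply, eq_comm]
    have h2 : ∀ i : Fin p, ∃ c : Fin n → ℝ,
        ∑ j, c j • v j = subFam (fun i => Pi.single i (1:ℝ)) s i :=
      fun i => (mem_span_range_iff_exists_fun ℝ).mp (hvtop _)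
    choose c hc using h2
    have h3 : subFam (fun i => Pi.single i (1:ℝ)) s = fun i => ∑ j, c i j • v j :=
      funext fun i => (hc i).symm
    rw [h1, h3, wedge_eq_ML, MultilinearMap.map_sum]
    apply Submodule.sum_mem
    intro r _
    have : (wedgeML n p fun i => c i (r i) • v (r i))
        = (∏ i, c i (r i)) • wedge n p (fun i => v (r i)) := by
      rw [← wedge_eq_ML, wedge_smul]
    rw [this]
    exact Submodule.smul_mem _ _ (key r)
  have hbtop : ⊤ ≤ span ℝ (Set.range fun s : WedgeIdx n p => Pi.single s (1:ℝ)) := by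
    have : (fun s : WedgeIdx n p => Pi.single s (1:ℝ))
        = ⇑(Pi.basisFun ℝ (WedgeIdx n p)) := by
      funext s
      simp [Pi.basisFun_apply]
    rw [this, (Pi.basisFun ℝ (WedgeIdx n p)).span_eq]
  refine le_trans hbtop (span_le.mpr ?_)
  rintro _ ⟨s, rfl⟩
  exact hsingle s

lemma succMin_nonneg {E : Type*} [AddCommGroup E] [Module ℝ E]
    (C L : Set E) (i : ℕ) : 0 ≤ succMin C L i :=
  Real.sInf_nonneg (fun _ hx => hx.1.le)

lemma smul_set_subset_smul_set {E : Type*} [AddCommGroup E] [Module ℝ E] {s : Set E}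
    (hconv : Convex ℝ s) (h0 : (0:E) ∈ s) {a b : ℝ} (ha : 0 ≤ a) (hab : a ≤ b) :
    a • s ⊆ b • s := by
  rcases eq_or_lt_of_le (ha.trans hab) with hb | hb
  · obtain rfl : a = b := le_antisymm hab (hb ▸ ha)
    exact subset_rfl
  · rintro x ⟨c, hc, rfl⟩
    refine ⟨(a/b) • c, hconv.smul_mem_of_zero_mem h0 hc
      ⟨by positivity, div_le_one_of_le₀ hab hb.le⟩, ?_⟩
    show b • ((a/b) • c) = a • c
    rw [smul_smul]
    congr 1
    field_simp

lemma succMin_set_nonempty (n : ℕ) (C : Set (Fin n → ℝ))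
    (h0 : (0 : Fin n → ℝ) ∈ interior C) (B : Fin n → Fin n → ℝ)
    (hB : (Matrix.of B).det ≠ 0) (m : ℕ) (hm : m ≤ n) :
    {lam : ℝ | 0 < lam ∧ ∃ v : Fin m → (Fin n → ℝ), LinearIndependent ℝ v ∧
      ∀ j, v j ∈ latticeOf B ∧ v j ∈ lam • C}.Nonempty := by
  obtain ⟨ε, hε, hball⟩ := Metric.mem_nhds_iff.mp (mem_interior_iff_mem_nhds.mp h0)
  have hballC : Metric.ball (0 : Fin n → ℝ) ε ⊆ C := hball
  set R : ℝ := 1 + ∑ i, ‖B i‖ with hR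
  have hRpos : 0 < R := by positivity
  have hBR : ∀ i, ‖B i‖ < R := by
    intro i
    have h1 : ‖B i‖ ≤ ∑ i, ‖B i‖ :=
      Finset.single_le_sum (fun _ _ => norm_nonneg _) (Finset.mem_univ i)
    linarith
  refine ⟨R / ε, div_pos hRpos hε, fun j => B (Fin.castLE hm j), ?_, fun j => ⟨?_, ?_⟩⟩
  · have hli : LinearIndependent ℝ (fun i => (Matrix.of B) i) :=
      Matrix.linearIndependent_rows_iff_isUnit.mpr
        ((Matrix.isUnit_iff_isUnit_det _).mpr (isUnit_iff_ne_zero.mpr hB))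
    exact hli.comp _ (Fin.castLE_injective hm)
  · exact ⟨Pi.single (Fin.castLE hm j) 1, by simp [Pi.single_apply]⟩
  · refine ⟨(ε / R) • B (Fin.castLE hm j), hballC ?_, ?_⟩
    · rw [mem_ball_zero_iff, norm_smul]
      have h2 : ‖B (Fin.castLE hm j)‖ < R := hBR _
      have h3 : (0:ℝ) < ε / R := by positivity
      calc ‖(ε/R : ℝ)‖ * ‖B (Fin.castLE hm j)‖ = (ε/R) * ‖B (Fin.castLE hm j)‖ := by
            rw [Real.norm_eq_abs, abs_of_pos h3]
        _ < (ε/R) * R := by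
            apply mul_lt_mul_of_pos_left h2 h3
        _ = ε := by field_simp
    · show (R/ε) • ((ε/R) • B (Fin.castLE hm j)) = B (Fin.castLE hm j)
      rw [smul_smul]
      have h4 : R / ε * (ε / R) = 1 := by field_simp
      rw [h4, one_smul]

lemma exists_chain (n : ℕ) (C : Set (Fin n → ℝ)) (hconv : Convex ℝ C)
    (h0 : (0 : Fin n → ℝ) ∈ interior C) (B : Fin n → Fin n → ℝ)
    (hB : (Matrix.of B).det ≠ 0) {δ : ℝ} (hδ : 0 < δ) :
    ∀ m, m ≤ n → ∃ v : Fin m → Fin n → ℝ, LinearIndependent ℝ v ∧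
      ∀ j : Fin m, v j ∈ latticeOf B ∧
        v j ∈ (succMin C (latticeOf B) (j.1 + 1) + δ) • C := by
  intro m
  induction m with
  | zero => exact fun _ => ⟨fun i => i.elim0, linearIndependent_empty_type, fun j => j.elim0⟩
  | succ m ih =>
    intro hm
    obtain ⟨v, hv, hvp⟩ := ih (Nat.le_of_succ_le hm)
    set S := {lam : ℝ | 0 < lam ∧ ∃ w : Fin (m+1) → (Fin n → ℝ), LinearIndependent ℝ w ∧
      ∀ j, w j ∈ latticeOf B ∧ w j ∈ lam • C} with hS
    have hSne : S.Nonempty := succMin_set_nonempty n C h0 B hB (m+1) hm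
    have hbdd : BddBelow S := ⟨0, fun x hx => hx.1.le⟩
    have hsm : succMin C (latticeOf B) (m+1) = sInf S := rfl
    have hlt : sInf S < succMin C (latticeOf B) (m+1) + δ := by
      rw [← hsm]; linarith
    obtain ⟨lam, hlamS, hlam⟩ := (csInf_lt_iff hbdd hSne).mp hlt
    obtain ⟨hlampos, w, hw, hwp⟩ := hlamS
    have hex : ∃ t, w t ∉ span ℝ (Set.range v) := by
      by_contra h
      push_neg at h
      have h1 : LinearIndependent ℝ
          (fun t => (⟨w t, h t⟩ : span ℝ (Set.range v))) :=
        LinearIndependent.of_comp (span ℝ (Set.range v)).subtype (by exact hw)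
      have h2 := h1.fintype_card_le_finrank
      have h3 := finrank_range_le_card (R := ℝ) v
      rw [Set.finrank] at h3
      simp only [Fintype.card_fin] at h2 h3
      omega
    obtain ⟨t, ht⟩ := hex
    refine ⟨Fin.snoc v (w t), linearIndependent_fin_snoc.mpr ⟨hv, ht⟩, ?_⟩
    intro j
    refine Fin.lastCases ?_ ?_ j
    · constructor
      · rw [Fin.snoc_last]
        exact (hwp t).1
      · rw [Fin.snoc_last]
        have hsub : lam • C ⊆ (succMin C (latticeOf B) ((Fin.last m).1 + 1) + δ) • C := by
          apply smul_set_subset_smul_set hconv (interior_subset h0) hlampos.le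
          simpa using hlam.le
        exact hsub (hwp t).2
    · intro i
      constructor
      · rw [Fin.snoc_castSucc]
        exact (hvp i).1
      · rw [Fin.snoc_castSucc]
        have : (i.castSucc).1 = i.1 := rfl
        rw [this]
        exact (hvp i).2

/-- Upper bound for the successive minima of compounds: if
`μ₁ ≤ ⋯ ≤ μ_N` are the products `λ_{i₁}(C,Λ)⋯λ_{i_p}(C,Λ)` over increasing
`p`-tuples, arranged in non-decreasing order (via a monotone enumeration `e`),
then `λ_i(C_p,Λ_p) ≤ μ_i` for `i = 1,…,N`. -/
theorem compound_succ_min_upper_bound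
    (n p : ℕ) (hp : 1 ≤ p) (hpn : p ≤ n - 1)
    (C : Set (Fin n → ℝ))
    (hcomp : IsCompact C) (hconv : Convex ℝ C) (hsym : C = -C)
    (h0 : (0 : Fin n → ℝ) ∈ interior C)
    (B : Fin n → Fin n → ℝ) (hB : (Matrix.of B).det ≠ 0)
    (e : Fin (Nat.choose n p) ≃ WedgeIdx n p)
    (he : Monotone fun k => ∏ j ∈ (e k).1, succMin C (latticeOf B) (j.1 + 1)) :
    ∀ k : Fin (Nat.choose n p),
      succMin (compoundBody n p C) (compoundLattice n p (latticeOf B)) (k.1 + 1) ≤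
        ∏ j ∈ (e k).1, succMin C (latticeOf B) (j.1 + 1) := by
  classical
  intro k
  have hp0 : 0 < p := hp
  suffices hsuf : ∀ ε : ℝ, 0 < ε →
      succMin (compoundBody n p C) (compoundLattice n p (latticeOf B)) (k.1 + 1) ≤
        (∏ j ∈ (e k).1, succMin C (latticeOf B) (j.1 + 1)) + ε by
    by_contra hc
    push_neg at hc
    have h1 := hsuf ((succMin (compoundBody n p C) (compoundLattice n p (latticeOf B)) (k.1 + 1)
      - ∏ j ∈ (e k).1, succMin C (latticeOf B) (j.1 + 1)) / 2) (by linarith)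
    linarith
  intro ε hε
  have hkN : k.1 + 1 ≤ Nat.choose n p := k.2
  set idx : Fin (k.1+1) → Fin (Nat.choose n p) :=
    fun k' => ⟨k'.1, lt_of_lt_of_le k'.2 hkN⟩ with hidx
  set f : Fin (k.1+1) → ℝ → ℝ :=
    fun k' δ => ∏ j ∈ (e (idx k')).1, (succMin C (latticeOf B) (j.1 + 1) + δ) with hfdef
  have hfc : ∀ k', ContinuousAt (f k') 0 := by
    intro k'
    apply Continuous.continuousAt
    rw [hfdef]
    exact continuous_finset_prod _ (fun j _ => continuous_const.add continuous_id)
  have hfε : ∀ k', ∃ d : ℝ, 0 < d ∧ ∀ x : ℝ, dist x 0 < d → dist (f k' x) (f k' 0) < ε := by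
    intro k'
    obtain ⟨d, hd, hdp⟩ := Metric.continuousAt_iff.mp (hfc k') ε hε
    exact ⟨d, hd, fun x hx => hdp hx⟩
  choose d hd0 hdp using hfε
  have hneu : (Finset.univ : Finset (Fin (k.1+1))).Nonempty := Finset.univ_nonempty
  set δ := (Finset.univ.inf' hneu d) / 2 with hδdef
  have hinfpos : 0 < Finset.univ.inf' hneu d := by
    rw [Finset.lt_inf'_iff]
    exact fun i _ => hd0 i
  have hδpos : 0 < δ := by positivity
  have hδlt : ∀ k', δ < d k' := by
    intro k'
    calc δ < Finset.univ.inf' hneu d := by rw [hδdef]; linarith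
      _ ≤ d k' := Finset.inf'_le _ (Finset.mem_univ k')
  obtain ⟨v, hv, hvp⟩ := exists_chain n C hconv h0 B hB hδpos n le_rfl
  have hM0 : 0 ≤ ∏ j ∈ (e k).1, succMin C (latticeOf B) (j.1 + 1) :=
    Finset.prod_nonneg (fun j _ => succMin_nonneg _ _ _)
  have hfb : ∀ k', f k' δ ≤ (∏ j ∈ (e k).1, succMin C (latticeOf B) (j.1 + 1)) + ε := by
    intro k'
    have h5 := hdp k' δ (by rw [Real.dist_eq, sub_zero, abs_of_pos hδpos]; exact hδlt k')
    rw [Real.dist_eq] at h5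
    have h6 : f k' δ - f k' 0 < ε := lt_of_le_of_lt (le_abs_self _) h5
    have h7 : f k' 0 ≤ ∏ j ∈ (e k).1, succMin C (latticeOf B) (j.1 + 1) := by
      have h8 : f k' 0 = ∏ j ∈ (e (idx k')).1, succMin C (latticeOf B) (j.1 + 1) := by
        rw [hfdef]; simp
      rw [h8]
      exact he (show idx k' ≤ k from by
        rw [Fin.le_def]
        exact Nat.lt_succ_iff.mp k'.2)
    linarith
  have hzeroC : (0 : Fin n → ℝ) ∈ C := interior_subset h0
  have h0body : (0 : WedgeIdx n p → ℝ) ∈ compoundBody n p C :=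
    subset_convexHull _ _ ⟨fun _ => 0, fun _ => hzeroC, (wedge_zero hp0).symm⟩
  have hbodyconv : Convex ℝ (compoundBody n p C) := convex_convexHull _ _
  have hWli : LinearIndependent ℝ
      (fun k' : Fin (k.1+1) => wedge n p (subFam v (e (idx k')))) := by
    have hli := linIndep_wedge_subFam (p := p) hv
    exact hli.comp (fun k' => e (idx k')) (by
      intro a b hab
      have h9 : (idx a).1 = (idx b).1 := congrArg Fin.val (e.injective hab)
      exact Fin.ext h9)
  have hWlat : ∀ k' : Fin (k.1+1),
      wedge n p (subFam v (e (idx k'))) ∈ compoundLattice n p (latticeOf B) := by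
    intro k'
    exact Submodule.subset_span ⟨subFam v (e (idx k')), fun i => (hvp _).1, rfl⟩
  have hWbody : ∀ k' : Fin (k.1+1), wedge n p (subFam v (e (idx k')))
      ∈ ((∏ j ∈ (e k).1, succMin C (latticeOf B) (j.1 + 1)) + ε) • compoundBody n p C := by
    intro k'
    set t := e (idx k') with htdef
    have hmem : ∀ i : Fin p, ∃ c ∈ C,
        (succMin C (latticeOf B) ((t.1.orderIsoOfFin t.2 i : Fin n).1 + 1) + δ) • c
          = subFam v t i := by
      intro i
      exact Set.mem_smul_set.mp (hvp ((t.1.orderIsoOfFin t.2 i : Fin n))).2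
    choose c hcC hc using hmem
    have hsf : subFam v t = fun i =>
        (succMin C (latticeOf B) ((t.1.orderIsoOfFin t.2 i : Fin n).1 + 1) + δ) • c i :=
      funext fun i => (hc i).symm
    have hws : wedge n p (subFam v t) = (∏ i : Fin p,
        (succMin C (latticeOf B) ((t.1.orderIsoOfFin t.2 i : Fin n).1 + 1) + δ))
          • wedge n p c := by
      rw [hsf, wedge_smul]
    have hprod : (∏ i : Fin p,
        (succMin C (latticeOf B) ((t.1.orderIsoOfFin t.2 i : Fin n).1 + 1) + δ)) = f k' δ := by
      have hfk : f k' δ = ∏ j ∈ t.1, (succMin C (latticeOf B) (j.1 + 1) + δ) := by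
        simp only [hfdef, ← htdef]
      rw [hfk,
        ← Finset.prod_coe_sort t.1 (fun j => succMin C (latticeOf B) (j.1 + 1) + δ)]
      exact Equiv.prod_comp (t.1.orderIsoOfFin t.2).toEquiv
        (fun x => succMin C (latticeOf B) ((x : Fin n).1 + 1) + δ)
    have hwc : wedge n p c ∈ compoundBody n p C :=
      subset_convexHull _ _ ⟨c, hcC, rfl⟩
    have h8 : wedge n p (subFam v t) ∈ (f k' δ) • compoundBody n p C := by
      rw [hws, hprod]
      exact Set.smul_mem_smul_set hwc
    have hfnn : 0 ≤ f k' δ := by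
      rw [hfdef]
      exact Finset.prod_nonneg (fun j _ => by
        have := succMin_nonneg C (latticeOf B) (j.1 + 1); linarith)
    exact smul_set_subset_smul_set hbodyconv h0body hfnn (hfb k') h8
  have hlampos : 0 < (∏ j ∈ (e k).1, succMin C (latticeOf B) (j.1 + 1)) + ε := by linarith
  exact csInf_le ⟨0, fun x hx => hx.1.le⟩
    ⟨hlampos, _, hWli, fun k' => ⟨hWlat k', hWbody k'⟩⟩
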